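/- arXiv:1307.1968 — 2 statements merged into one kernel-verified Lean document; each statement's English description precedes it below -/
import Mathlib

section
/- If ℓ²(A) = M ⊕ N, where M and N are closed submodules of the standard Hilbert A-module ℓ²(A) and N has a finite number of generators, then N is a projective A-module. -/
noncomputable section
open scoped ComplexOrder
open Filter Finset
set_option linter.unusedSectionVars false
set_option maxHeartbeats 1000000

namespace L2Aux
variable {A : Type*} [CStarAlgebra A] [PartialOrder A] [StarOrderedRing A]

def normFin (x : ℕ → A) (F : Finset ℕ) : ℝ := Real.sqrt ‖∑ i ∈ F, x i * star (x i)‖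
lemma sumFin_nonneg (x : ℕ → A) (F : Finset ℕ) : 0 ≤ ∑ i ∈ F, x i * star (x i) :=
  Finset.sum_nonneg fun i _ => mul_star_self_nonneg (x i)
lemma normFin_nonneg (x : ℕ → A) (F : Finset ℕ) : 0 ≤ normFin x F := Real.sqrt_nonneg _
lemma normFin_sq (x : ℕ → A) (F : Finset ℕ) :
    normFin x F ^ 2 = ‖∑ i ∈ F, x i * star (x i)‖ := Real.sq_sqrt (norm_nonneg _)
/-- Relate `normFin` to the norm in the standard finite C⋆-module. -/
lemma normFin_eq (x : ℕ → A) (F : Finset ℕ) :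
    normFin x F =
      ‖((WithCStarModule.equiv A (∀ _ : F, A)).symm (fun i => x i) : WithCStarModule A (∀ _ : F, A))‖ := by
  rw [WithCStarModule.pi_norm, normFin]
  congr 2
  rw [← Finset.sum_coe_sort F (fun i => x i * star (x i))]
  refine Finset.sum_congr rfl fun i _ => ?_
  simp [WithCStarModule.inner_def]

lemma normFin_triangle (x y : ℕ → A) (F : Finset ℕ) :
    normFin (x + y) F ≤ normFin x F + normFin y F := by
  rw [normFin_eq, normFin_eq x, normFin_eq y]
  have : ((WithCStarModule.equiv A (∀ _ : F, A)).symm (fun i => (x + y) i))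
      = (WithCStarModule.equiv A (∀ _ : F, A)).symm (fun i => x i)
        + (WithCStarModule.equiv A (∀ _ : F, A)).symm (fun i => y i) := by
    rw [← WithCStarModule.equiv_symm_add]
    congr 1
  rw [this]
  exact norm_add_le _ _

lemma normFin_mono (x : ℕ → A) {F G : Finset ℕ} (h : F ⊆ G) : normFin x F ≤ normFin x G :=
  Real.sqrt_le_sqrt <| CStarAlgebra.norm_le_norm_of_nonneg_of_le (sumFin_nonneg x F)
    (Finset.sum_le_sum_of_subset_of_nonneg h fun i _ _ => mul_star_self_nonneg (x i))

lemma summable_add {x y : ℕ → A} (hx : Summable fun i => x i * star (x i))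
    (hy : Summable fun i => y i * star (y i)) :
    Summable fun i => (x + y) i * star ((x + y) i) := by
  rw [summable_iff_vanishing_norm]
  intro ε hε
  obtain ⟨s, hs⟩ := summable_iff_vanishing_norm.mp hx (ε / 4) (by linarith)
  obtain ⟨t, ht⟩ := summable_iff_vanishing_norm.mp hy (ε / 4) (by linarith)
  refine ⟨s ∪ t, fun u hu => ?_⟩
  have h1 : normFin x u ^ 2 < ε / 4 := by
    rw [normFin_sq]; exact hs u (hu.mono_right Finset.subset_union_left)
  have h2 : normFin y u ^ 2 < ε / 4 := by
    rw [normFin_sq]; exact ht u (hu.mono_right Finset.subset_union_right)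
  have h3 : normFin (x + y) u ≤ normFin x u + normFin y u := normFin_triangle x y u
  have h4 : normFin x u < Real.sqrt (ε / 4) := by
    have := normFin_nonneg x u
    nlinarith [Real.sq_sqrt (by linarith : (0:ℝ) ≤ ε / 4), Real.sqrt_nonneg (ε/4)]
  have h5 : normFin y u < Real.sqrt (ε / 4) := by
    have := normFin_nonneg y u
    nlinarith [Real.sq_sqrt (by linarith : (0:ℝ) ≤ ε / 4), Real.sqrt_nonneg (ε/4)]
  have h6 : normFin (x + y) u ^ 2 < ε := by
    have h7 := Real.sq_sqrt (by linarith : (0:ℝ) ≤ ε / 4)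
    nlinarith [normFin_nonneg (x + y) u, Real.sqrt_nonneg (ε/4)]
  rwa [normFin_sq] at h6

lemma summable_smul {x : ℕ → A} (a : A) (hx : Summable fun i => x i * star (x i)) :
    Summable fun i => (a • x) i * star ((a • x) i) := by
  have : (fun i => (a • x) i * star ((a • x) i))
      = fun i => a * (x i * star (x i)) * star a := by
    funext i; simp [Pi.smul_apply, smul_eq_mul, star_mul, mul_assoc]
  rw [this]
  exact (hx.mul_left a).mul_right (star a)

lemma summable_neg {x : ℕ → A} (hx : Summable fun i => x i * star (x i)) :
    Summable fun i => (-x) i * star ((-x) i) := by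
  simpa using hx

/-- The standard Hilbert module ℓ²(A), as a bespoke structure carrying its own topology. -/
structure Hmod (A : Type*) [CStarAlgebra A] where
  val : ℕ → A
  summable' : Summable fun i => val i * star (val i)

namespace Hmod

@[ext] lemma ext {x y : Hmod A} (h : x.val = y.val) : x = y := by cases x; cases y; congr

instance : Zero (Hmod A) := ⟨⟨0, by simpa using summable_zero⟩⟩
instance : Add (Hmod A) := ⟨fun x y => ⟨x.val + y.val, summable_add x.summable' y.summable'⟩⟩
instance : Neg (Hmod A) := ⟨fun x => ⟨-x.val, summable_neg x.summable'⟩⟩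
instance : SMul A (Hmod A) := ⟨fun a x => ⟨a • x.val, summable_smul a x.summable'⟩⟩
instance : SMul ℂ (Hmod A) := ⟨fun z x => ⟨(algebraMap ℂ A z) • x.val,
  summable_smul _ x.summable'⟩⟩
instance : SMul ℕ (Hmod A) := ⟨fun n x => ⟨(n : A) • x.val, summable_smul _ x.summable'⟩⟩
instance : SMul ℤ (Hmod A) := ⟨fun n x => ⟨(n : A) • x.val, summable_smul _ x.summable'⟩⟩
instance : Sub (Hmod A) := ⟨fun x y => ⟨x.val + -y.val,
  summable_add x.summable' (summable_neg y.summable')⟩⟩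

@[simp] lemma zero_val : (0 : Hmod A).val = 0 := rfl
@[simp] lemma add_val (x y : Hmod A) : (x + y).val = x.val + y.val := rfl
@[simp] lemma neg_val (x : Hmod A) : (-x).val = -x.val := rfl
@[simp] lemma sub_val (x y : Hmod A) : (x - y).val = x.val - y.val := by
  show x.val + -y.val = _
  rw [sub_eq_add_neg]
@[simp] lemma smul_val (a : A) (x : Hmod A) : (a • x).val = a • x.val := rfl
lemma smul_val_complex' (z : ℂ) (x : Hmod A) :
    (z • x).val = (algebraMap ℂ A z) • x.val := rfl
@[simp] lemma smul_val_complex (z : ℂ) (x : Hmod A) :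
    (z • x).val = z • x.val := algebraMap_smul A z x.val ▸ rfl

lemma val_injective : Function.Injective (val : Hmod A → ℕ → A) := fun _ _ h => ext h

instance : AddCommGroup (Hmod A) :=
  val_injective.addCommGroup val rfl (fun _ _ => rfl) (fun _ => rfl) (fun x y => sub_val x y)
    (fun x n => by ext i; exact congrFun (Nat.cast_smul_eq_nsmul A n x.val) i)
    (fun x n => by ext i; exact congrFun (Int.cast_smul_eq_zsmul A n x.val) i)

/-- `val` as an additive monoid hom. -/
def valAddHom : Hmod A →+ (ℕ → A) :=
  { toFun := val, map_zero' := rfl, map_add' := fun _ _ => rfl }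

instance : Module A (Hmod A) := val_injective.module A valAddHom (fun _ _ => rfl)

instance : Module ℂ (Hmod A) :=
  val_injective.module ℂ valAddHom (fun c x => smul_val_complex c x)

instance : IsScalarTower ℂ A (Hmod A) := by
  refine ⟨fun z a x => ?_⟩
  ext i
  show ((z • a) • x.val) i = ((algebraMap ℂ A z) • (a • x.val)) i
  simp [Algebra.smul_def, mul_assoc]


/-- The "Gram" element `∑' i, x i * star (x i)`. -/
def gram (x : Hmod A) : A := ∑' i, x.val i * star (x.val i)

lemma hasSum_gram (x : Hmod A) : HasSum (fun i => x.val i * star (x.val i)) (gram x) :=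
  x.summable'.hasSum

lemma gram_nonneg (x : Hmod A) : 0 ≤ gram x :=
  tsum_nonneg fun i => mul_star_self_nonneg _

instance : Norm (Hmod A) := ⟨fun x => Real.sqrt ‖gram x‖⟩

lemma norm_def (x : Hmod A) : ‖x‖ = Real.sqrt ‖gram x‖ := rfl

lemma norm_sq (x : Hmod A) : ‖x‖ ^ 2 = ‖gram x‖ := Real.sq_sqrt (norm_nonneg _)

lemma norm_nonneg' (x : Hmod A) : 0 ≤ ‖x‖ := Real.sqrt_nonneg _

/-- The norm is the limit of the truncated norms. -/
lemma tendsto_normFin (x : Hmod A) :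
    Tendsto (fun F : Finset ℕ => normFin x.val F) atTop (nhds ‖x‖) := by
  have h1 : Tendsto (fun F : Finset ℕ => ∑ i ∈ F, x.val i * star (x.val i)) atTop
      (nhds (gram x)) := (hasSum_gram x)
  exact ((h1.norm).sqrt : _)

lemma normFin_le_norm (x : Hmod A) (F : Finset ℕ) : normFin x.val F ≤ ‖x‖ := by
  refine Real.sqrt_le_sqrt ?_
  exact CStarAlgebra.norm_le_norm_of_nonneg_of_le (sumFin_nonneg x.val F)
    (Summable.sum_le_tsum F (fun i _ => mul_star_self_nonneg _) x.summable')

lemma norm_coord_le (x : Hmod A) (i : ℕ) : ‖x.val i‖ ≤ ‖x‖ := by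
  have h := normFin_le_norm x {i}
  rw [normFin] at h
  rw [Finset.sum_singleton] at h
  calc ‖x.val i‖ = Real.sqrt ‖x.val i * star (x.val i)‖ := by
        rw [CStarRing.norm_self_mul_star]
        rw [Real.sqrt_mul_self (norm_nonneg _)]
    _ ≤ ‖x‖ := h

lemma norm_triangle' (x y : Hmod A) : ‖x + y‖ ≤ ‖x‖ + ‖y‖ := by
  refine le_of_tendsto (tendsto_normFin (x + y)) (Filter.Eventually.of_forall fun F => ?_)
  calc normFin (x + y).val F = normFin (x.val + y.val) F := rfl
    _ ≤ normFin x.val F + normFin y.val F := normFin_triangle _ _ _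
    _ ≤ ‖x‖ + ‖y‖ := add_le_add (normFin_le_norm x F) (normFin_le_norm y F)

lemma norm_eq_zero_iff' (x : Hmod A) : ‖x‖ = 0 ↔ x = 0 := by
  constructor
  · intro h
    have hg : ‖gram x‖ = 0 := by
      have := norm_sq x
      rw [h] at this
      simpa using this.symm
    ext i
    have hi := norm_coord_le x i
    rw [norm_def, hg] at hi
    have : ‖x.val i‖ ≤ 0 := by simpa using hi
    simpa using le_antisymm this (norm_nonneg _)
  · rintro rfl
    have : gram (0 : Hmod A) = 0 := by
      simp [gram]
    simp [norm_def, this]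

lemma norm_smul_le' (a : A) (x : Hmod A) : ‖a • x‖ ≤ ‖a‖ * ‖x‖ := by
  have hg : gram (a • x) = a * gram x * star a := by
    rw [gram, gram]
    have : (fun i => (a • x).val i * star ((a • x).val i))
        = fun i => a * (x.val i * star (x.val i)) * star a := by
      funext i; simp [smul_eq_mul, star_mul, mul_assoc]
    rw [this, (x.summable'.mul_left a).tsum_mul_right, x.summable'.tsum_mul_left]
  rw [norm_def, hg]
  calc Real.sqrt ‖a * gram x * star a‖ ≤ Real.sqrt (‖a‖ * ‖gram x‖ * ‖a‖) := by
        refine Real.sqrt_le_sqrt ?_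
        calc ‖a * gram x * star a‖ ≤ ‖a * gram x‖ * ‖star a‖ := norm_mul_le _ _
          _ ≤ ‖a‖ * ‖gram x‖ * ‖a‖ := by
              rw [norm_star]
              exact mul_le_mul_of_nonneg_right (norm_mul_le _ _) (norm_nonneg _)
    _ = ‖a‖ * Real.sqrt ‖gram x‖ := by
        rw [show ‖a‖ * ‖gram x‖ * ‖a‖ = ‖a‖^2 * ‖gram x‖ by ring]
        rw [Real.sqrt_mul (by positivity), Real.sqrt_sq (norm_nonneg _)]

lemma norm_smul_complex (z : ℂ) (x : Hmod A) : ‖z • x‖ = ‖z‖ * ‖x‖ := by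
  have hg : gram (z • x) = (‖z‖^2 : ℝ) • gram x := by
    rw [gram, gram]
    have : (fun i => (z • x).val i * star ((z • x).val i))
        = fun i => (‖z‖^2 : ℝ) • (x.val i * star (x.val i)) := by
      funext i
      rw [smul_val_complex]
      show (z • x.val i) * star (z • x.val i) = _
      rw [star_smul, smul_mul_assoc, mul_smul_comm, smul_smul]
      rw [show z * star z = ((‖z‖^2 : ℝ) : ℂ) by
        rw [RCLike.star_def, Complex.mul_conj']
        norm_cast]
      rw [show (((‖z‖^2 : ℝ) : ℂ)) • (x.val i * star (x.val i))
            = (‖z‖^2 : ℝ) • (x.val i * star (x.val i)) from Complex.coe_smul _ _]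
    rw [this, ((x.summable'.hasSum.const_smul ((‖z‖^2 : ℝ))).tsum_eq :)]
  rw [norm_def, norm_def, hg, norm_smul]
  rw [Real.sqrt_mul (by positivity)]
  simp [Real.sqrt_sq]

/-- `Hmod A` as a normed additive commutative group. -/
instance : NormedAddCommGroup (Hmod A) :=
  NormedAddCommGroup.ofCore
    { norm_nonneg := norm_nonneg'
      norm_smul := fun z x => by rw [norm_smul_complex]
      norm_triangle := norm_triangle'
      norm_eq_zero_iff := norm_eq_zero_iff' : NormedSpace.Core ℂ (Hmod A)}

instance : NormedSpace ℂ (Hmod A) :=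
  NormedSpace.ofCore
    { norm_nonneg := norm_nonneg'
      norm_smul := fun z x => by rw [norm_smul_complex]
      norm_triangle := norm_triangle'
      norm_eq_zero_iff := norm_eq_zero_iff' }


lemma val_sum {ι : Type*} (s : Finset ι) (f : ι → Hmod A) :
    (∑ k ∈ s, f k).val = ∑ k ∈ s, (f k).val := map_sum (valAddHom (A := A)) f s

lemma normFin_sum_le {ι : Type*} (s : Finset ι) (f : ι → Hmod A) (F : Finset ℕ) :
    normFin (∑ k ∈ s, f k).val F ≤ ∑ k ∈ s, ‖f k‖ := by
  classical
  induction s using Finset.induction with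
  | empty => simp [normFin]
  | @insert a s h ih =>
      rw [Finset.sum_insert h, Finset.sum_insert h]
      calc normFin (f a + ∑ k ∈ s, f k).val F
          ≤ normFin (f a).val F + normFin (∑ k ∈ s, f k).val F := by
            rw [add_val]; exact normFin_triangle _ _ F
        _ ≤ ‖f a‖ + ∑ k ∈ s, ‖f k‖ := add_le_add (normFin_le_norm _ F) ih

instance : CompleteSpace (Hmod A) := by
  refine NormedAddCommGroup.completeSpace_of_summable_imp_tendsto fun u hu => ?_
  -- coordinatewise sums
  have hcoord : ∀ i, Summable fun n => (u n).val i := fun i =>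
    Summable.of_norm_bounded hu fun n => norm_coord_le (u n) i
  set g : ℕ → A := fun i => ∑' n, (u n).val i with hg
  set S : ℕ → Hmod A := fun K => ∑ k ∈ Finset.range K, u k with hS
  -- the scalar tails
  set τ : ℕ → ℝ := fun K => ∑' n, ‖u (n + K)‖ with hτ
  have hτ0 : Tendsto τ atTop (nhds 0) := by
    exact tendsto_sum_nat_add fun n => ‖u n‖
  have hτnonneg : ∀ K, 0 ≤ τ K := fun K => tsum_nonneg fun n => norm_nonneg _
  have hshift : ∀ K, Summable fun n => ‖u (n + K)‖ := fun K =>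
    (summable_nat_add_iff K).mpr hu
  have hSval : ∀ K i, (S K).val i = ∑ k ∈ Finset.range K, (u k).val i := by
    intro K i
    rw [hS, val_sum]
    simp
  -- difference coordinates
  set d : ℕ → ℕ → A := fun K i => g i - (S K).val i with hd
  have hdval : ∀ K i, d K i = ∑' n, (u (n + K)).val i := by
    intro K i
    rw [hd]
    have := ((summable_nat_add_iff (f := fun n => (u n).val i) K).mpr (hcoord i))
    have h2 := (hcoord i).sum_add_tsum_nat_add K
    rw [hg]
    simp only [hSval]
    rw [← h2]
    abel
  -- key uniform bound on finite truncations of the tails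
  have keyb : ∀ K (F : Finset ℕ), normFin (d K) F ≤ τ K := by
    intro K F
    have hm : ∀ m, normFin (fun i => ∑ k ∈ Finset.range m, (u (k + K)).val i) F ≤ τ K := by
      intro m
      have h1 : (fun i => ∑ k ∈ Finset.range m, (u (k + K)).val i)
          = (∑ k ∈ Finset.range m, u (k + K)).val := by
        funext i; rw [val_sum]; simp
      rw [h1]
      calc normFin _ F ≤ ∑ k ∈ Finset.range m, ‖u (k + K)‖ := normFin_sum_le _ _ F
        _ ≤ τ K := Summable.sum_le_tsum _ (fun n _ => norm_nonneg _) (hshift K)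
    -- pass to the limit m → ∞
    have hlim : Tendsto (fun m => ∑ i ∈ F, (∑ k ∈ Finset.range m, (u (k + K)).val i) *
        star (∑ k ∈ Finset.range m, (u (k + K)).val i)) atTop
        (nhds (∑ i ∈ F, d K i * star (d K i))) := by
      refine tendsto_finset_sum F fun i _ => ?_
      have hsum : Tendsto (fun m => ∑ k ∈ Finset.range m, (u (k + K)).val i) atTop
          (nhds (d K i)) := by
        rw [hdval]
        exact ((summable_nat_add_iff K).mpr (hcoord i)).hasSum.tendsto_sum_nat
      exact hsum.mul hsum.star
    have hub : ∀ m, ‖∑ i ∈ F, (∑ k ∈ Finset.range m, (u (k + K)).val i) *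
        star (∑ k ∈ Finset.range m, (u (k + K)).val i)‖ ≤ (τ K)^2 := by
      intro m
      have h := hm m
      have h2 := normFin_sq (fun i => ∑ k ∈ Finset.range m, (u (k + K)).val i) F
      nlinarith [normFin_nonneg (fun i => ∑ k ∈ Finset.range m, (u (k + K)).val i) F,
        hτnonneg K]
    have := le_of_tendsto hlim.norm (Filter.Eventually.of_forall hub)
    rw [normFin]
    have h3 : (0:ℝ) ≤ τ K := hτnonneg K
    calc Real.sqrt ‖∑ i ∈ F, d K i * star (d K i)‖ ≤ Real.sqrt ((τ K)^2) :=
          Real.sqrt_le_sqrt this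
      _ = τ K := by rw [Real.sqrt_sq h3]
  -- summability of the tails: `d K ∈ ℓ²(A)`
  have hdsum : ∀ K, Summable fun i => d K i * star (d K i) := by
    intro K
    rw [summable_iff_vanishing_norm]
    intro ε hε
    have hsq : (0:ℝ) < Real.sqrt ε / 2 := by positivity
    obtain ⟨j, hj⟩ : ∃ j, τ (K + j) < Real.sqrt ε / 2 := by
      have := hτ0.eventually (eventually_lt_nhds hsq)  -- τ K' < √ε/2 eventually
      obtain ⟨m, hm⟩ := (this.and (eventually_ge_atTop K)).exists
      exact ⟨m - K, by rw [Nat.add_sub_cancel' hm.2]; exact hm.1⟩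
    set w : Hmod A := S (K + j) - S K with hw
    obtain ⟨s, hs⟩ := summable_iff_vanishing_norm.mp w.summable' ((Real.sqrt ε / 2)^2)
      (by positivity)
    refine ⟨s, fun F hF => ?_⟩
    have hsplit : d K = fun i => d (K + j) i + w.val i := by
      funext i
      rw [hd, hw]
      simp only [sub_val, Pi.sub_apply]
      abel
    have h1 : normFin (d K) F ≤ normFin (d (K + j)) F + normFin w.val F := by
      rw [hsplit]
      exact normFin_triangle _ _ F
    have h2 : normFin w.val F < Real.sqrt ε / 2 := by
      have := hs F hF
      have h4 := normFin_sq w.val F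
      nlinarith [normFin_nonneg w.val F, hsq]
    have h5 : normFin (d K) F < Real.sqrt ε := by
      have := keyb (K + j) F
      linarith
    have h6 := normFin_sq (d K) F
    nlinarith [normFin_nonneg (d K) F, Real.sq_sqrt hε.le, Real.sqrt_nonneg ε]
  -- the limit element
  have hgsum : Summable fun i => g i * star (g i) := by
    have := hdsum 0
    simpa [hd, hS] using this
  refine ⟨⟨g, hgsum⟩, ?_⟩
  -- convergence of partial sums to the limit
  rw [← tendsto_sub_nhds_zero_iff]
  have hnorm : ∀ K, ‖(⟨g, hgsum⟩ : Hmod A) - S K‖ ≤ τ K := by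
    intro K
    have hval : ((⟨g, hgsum⟩ : Hmod A) - S K).val = d K := by
      funext i; simp [hd]
    have hgram : HasSum (fun i => d K i * star (d K i))
        (gram ((⟨g, hgsum⟩ : Hmod A) - S K)) := by
      rw [show (fun i => d K i * star (d K i)) = fun i =>
        ((⟨g, hgsum⟩ : Hmod A) - S K).val i * star (((⟨g, hgsum⟩ : Hmod A) - S K).val i) by
          rw [hval]]
      exact hasSum_gram _
    have hle : ‖gram ((⟨g, hgsum⟩ : Hmod A) - S K)‖ ≤ (τ K)^2 := by
      refine le_of_tendsto (Filter.Tendsto.norm hgram)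
        (Filter.Eventually.of_forall fun F => ?_)
      have := keyb K F
      have h2 := normFin_sq (d K) F
      nlinarith [normFin_nonneg (d K) F, hτnonneg K]
    rw [norm_def]
    calc Real.sqrt ‖gram _‖ ≤ Real.sqrt ((τ K)^2) := Real.sqrt_le_sqrt hle
      _ = τ K := Real.sqrt_sq (hτnonneg K)
  have : Tendsto (fun K => (⟨g, hgsum⟩ : Hmod A) - S K) atTop (nhds 0) := by
    rw [tendsto_zero_iff_norm_tendsto_zero]
    refine squeeze_zero (fun K => norm_nonneg _) hnorm hτ0
  simpa using this.neg


/-- Truncation to the first `n` coordinates. -/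
def trunc (n : ℕ) : Hmod A →ₗ[A] (Fin n → A) where
  toFun x := fun i => x.val i
  map_add' x y := rfl
  map_smul' a x := rfl

/-- Embedding of `A^n` into `ℓ²(A)`. -/
def jmap (n : ℕ) : (Fin n → A) →ₗ[A] Hmod A where
  toFun v := ⟨fun i => if h : i < n then v ⟨i, h⟩ else 0, by
    refine summable_of_ne_finset_zero (s := Finset.range n) fun i hi => ?_
    rw [Finset.mem_range] at hi
    simp [hi]⟩
  map_add' v w := by
    ext i
    show (if h : i < n then (v + w) ⟨i, h⟩ else 0) = _
    by_cases h : i < n <;> simp [h]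
  map_smul' a v := by
    ext i
    show (if h : i < n then (a • v) ⟨i, h⟩ else 0) = _
    by_cases h : i < n <;> simp [h]

/-- Truncation as an operator on `ℓ²(A)`. -/
def Qn (n : ℕ) : Hmod A →ₗ[A] Hmod A := (jmap n).comp (trunc n)

lemma Qn_val (n : ℕ) (x : Hmod A) (i : ℕ) :
    ((Qn n) x).val i = if i < n then x.val i else 0 := by
  show (if h : i < n then x.val i else 0) = _
  by_cases h : i < n <;> simp [h]

lemma sub_Qn_val (n : ℕ) (x : Hmod A) (i : ℕ) :
    (x - (Qn n) x).val i = if i < n then 0 else x.val i := by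
  rw [sub_val, Pi.sub_apply, Qn_val]
  by_cases h : i < n <;> simp [h]

lemma gram_sub_Qn (n : ℕ) (x : Hmod A) :
    (∑ i ∈ Finset.range n, x.val i * star (x.val i)) + gram (x - (Qn n) x) = gram x := by
  set f : ℕ → A := fun i => x.val i * star (x.val i) with hf
  have h1 : (fun i => (x - (Qn n) x).val i * star ((x - (Qn n) x).val i))
      = fun i => if i < n then 0 else f i := by
    funext i
    rw [sub_Qn_val]
    by_cases h : i < n <;> simp [h, hf]
  have h2 : Summable fun i => if i < n then 0 else f i := by
    rw [← h1]; exact (x - (Qn n) x).summable'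
  have h2' : Summable fun i => if i < n then f i else 0 :=
    summable_of_ne_finset_zero (s := Finset.range n) fun i hi => by
      rw [Finset.mem_range] at hi; simp [hi]
  have h3 : ∑ i ∈ Finset.range n, f i = ∑' i, (if i < n then f i else 0) := by
    rw [tsum_eq_sum (s := Finset.range n) fun i hi => by
      rw [Finset.mem_range] at hi; simp [hi]]
    refine (Finset.sum_congr rfl fun i hi => ?_)
    rw [Finset.mem_range] at hi; simp [hi]
  have h4 : gram (x - (Qn n) x) = ∑' i, (if i < n then 0 else f i) := by
    rw [gram]; exact tsum_congr fun i => congrFun h1 i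
  rw [h3, h4, ← h2'.tsum_add h2]
  rw [gram]
  congr 1
  funext i
  by_cases h : i < n <;> simp [h, hf]

lemma tendsto_norm_sub_Qn (x : Hmod A) :
    Tendsto (fun n => ‖x - (Qn n) x‖) atTop (nhds 0) := by
  have h1 : Tendsto (fun n => gram (x - (Qn n) x)) atTop (nhds 0) := by
    have h2 : Tendsto (fun n => ∑ i ∈ Finset.range n, x.val i * star (x.val i)) atTop
        (nhds (gram x)) := (hasSum_gram x).tendsto_sum_nat
    have h3 : (fun n => gram (x - (Qn n) x))
        = fun n => gram x - ∑ i ∈ Finset.range n, x.val i * star (x.val i) := by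
      funext n
      rw [← gram_sub_Qn n x]
      abel
    rw [h3]
    simpa using (tendsto_const_nhds (x := gram x)).sub h2
  have h4 : Tendsto (fun n => ‖gram (x - (Qn n) x)‖) atTop (nhds 0) := by
    simpa using h1.norm
  have := h4.sqrt
  simpa [norm_def, Real.sqrt_zero] using this

lemma norm_Qn_le (n : ℕ) (x : Hmod A) : ‖(Qn n) x‖ ≤ ‖x‖ := by
  have h1 : gram ((Qn n) x) = ∑ i ∈ Finset.range n, x.val i * star (x.val i) := by
    rw [gram]
    rw [tsum_eq_sum (s := Finset.range n) fun i hi => by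
      rw [Finset.mem_range] at hi; rw [Qn_val]; simp [hi]]
    refine Finset.sum_congr rfl fun i hi => ?_
    rw [Finset.mem_range] at hi; rw [Qn_val]; simp [hi]
  have := normFin_le_norm x (Finset.range n)
  rw [norm_def, h1]
  exact this

lemma jmap_val (n : ℕ) (v : Fin n → A) (i : ℕ) :
    ((jmap n) v).val i = if h : i < n then v ⟨i, h⟩ else 0 := rfl

lemma norm_jmap_le (n : ℕ) (v : Fin n → A) : ‖(jmap n) v‖ ≤ ∑ i, ‖v i‖ := by
  have hval : ∀ i (h : i < n), ((jmap n) v).val i = v ⟨i, h⟩ := fun i h => dif_pos h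
  have h1 : gram ((jmap n) v) = ∑ i, v i * star (v i) := by
    rw [gram]
    rw [tsum_eq_sum (s := Finset.range n) fun i hi => by
      rw [Finset.mem_range] at hi
      simp [jmap_val, hi]]
    rw [Finset.sum_range fun i => ((jmap n) v).val i * star (((jmap n) v).val i)]
    refine Finset.sum_congr rfl fun i _ => ?_
    rw [hval i i.isLt]
  rw [norm_def, h1]
  have h2 : ‖∑ i, v i * star (v i)‖ ≤ (∑ i, ‖v i‖)^2 := by
    calc ‖∑ i, v i * star (v i)‖ ≤ ∑ i, ‖v i * star (v i)‖ := norm_sum_le _ _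
      _ = ∑ i, ‖v i‖^2 := by
          refine Finset.sum_congr rfl fun i _ => ?_
          rw [CStarRing.norm_self_mul_star, sq]
      _ ≤ (∑ i, ‖v i‖)^2 := Finset.sum_sq_le_sq_sum_of_nonneg fun i _ => norm_nonneg _
  calc Real.sqrt ‖∑ i, v i * star (v i)‖ ≤ Real.sqrt ((∑ i, ‖v i‖)^2) := Real.sqrt_le_sqrt h2
    _ = ∑ i, ‖v i‖ := Real.sqrt_sq (Finset.sum_nonneg fun i _ => norm_nonneg _)

lemma norm_trunc_le (n : ℕ) (x : Hmod A) : ‖(trunc n) x‖ ≤ ‖x‖ := by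
  refine (pi_norm_le_iff_of_nonneg (norm_nonneg' x)).mpr fun i => ?_
  exact norm_coord_le x i


/-- Abstract form: a finitely generated, topologically complemented submodule of `ℓ²(A)` is
projective. -/
theorem projective_of_isCompl_closed_fg (M N : Submodule A (Hmod A)) (hMN : IsCompl M N)
    (hM : IsClosed (M : Set (Hmod A))) (hN : IsClosed (N : Set (Hmod A))) (hNfg : N.FG) :
    Module.Projective A ↥N := by
  classical
  haveI : CompleteSpace ↥N := hN.completeSpace_coe
  -- the projection onto N along M
  set π : Hmod A →ₗ[A] ↥N := N.linearProjOfIsCompl M hMN.symm with hπdef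
  set p : Hmod A →ₗ[A] Hmod A := N.subtype.comp π with hpdef
  have hp_left : ∀ x : Hmod A, x ∈ N → p x = x := fun x hx => by
    rw [hpdef]
    exact congrArg Subtype.val
      (Submodule.linearProjOfIsCompl_apply_left hMN.symm ⟨x, hx⟩)
  have hp_right : ∀ x : Hmod A, x ∈ M → p x = 0 := fun x hx => by
    show ((π x : ↥N) : Hmod A) = 0
    rw [show π x = 0 from Submodule.projectionOnto_apply_of_mem_right hMN.symm hx]
    rfl
  have hp_sub_mem : ∀ x : Hmod A, x - p x ∈ M := by
    intro x
    have h := Submodule.projection_add_projection_eq_self hMN x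
    have : x - p x = (M.linearProjOfIsCompl N hMN x : Hmod A) := by
      rw [sub_eq_iff_eq_add]
      exact h.symm
    rw [this]
    exact (M.linearProjOfIsCompl N hMN x).2
  -- continuity of the projection, via the closed graph theorem
  have hpcont : Continuous p := by
    refine LinearMap.continuous_of_isClosed_graph (g := p.restrictScalars ℂ) ?_
    have hgraph : ((p.restrictScalars ℂ).graph : Set (Hmod A × Hmod A)) =
        {z : Hmod A × Hmod A | z.2 ∈ N ∧ z.1 - z.2 ∈ M} := by
      ext z
      simp only [SetLike.mem_coe, LinearMap.mem_graph_iff, Set.mem_setOf_eq,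
        LinearMap.restrictScalars_apply]
      constructor
      · intro h
        rw [h]
        exact ⟨(π z.1).2, hp_sub_mem z.1⟩
      · rintro ⟨h1, h2⟩
        have : p (z.1 - z.2) = 0 := hp_right _ h2
        rw [map_sub] at this
        have h3 : p z.2 = z.2 := hp_left _ h1
        rw [h3] at this
        rw [sub_eq_zero] at this
        exact this.symm
    rw [hgraph]
    exact ((hN.preimage continuous_snd)).inter
      (hM.preimage (continuous_fst.sub continuous_snd))
  have hπcont : Continuous (π : Hmod A → ↥N) := by
    refine Continuous.subtype_mk ?_ _
    exact hpcont
  set πL : Hmod A →L[ℂ] ↥N := ⟨π.restrictScalars ℂ, hπcont⟩ with hπL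
  -- generators
  obtain ⟨s, hs⟩ := hNfg
  set σ : ({x // x ∈ s} → A) →ₗ[A] ↥N :=
    { toFun := fun f => ⟨∑ i : {x // x ∈ s}, f i • (i : Hmod A),
        Submodule.sum_mem N fun i _ => N.smul_mem _ (hs ▸ Submodule.subset_span i.2)⟩
      map_add' := fun f g => by
        apply Subtype.ext
        push_cast
        rw [← Finset.sum_add_distrib]
        exact Finset.sum_congr rfl fun i _ => add_smul _ _ _
      map_smul' := fun a f => by
        apply Subtype.ext
        push_cast
        rw [Finset.smul_sum]
        exact Finset.sum_congr rfl fun i _ => mul_smul _ _ _ } with hσdef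
  have hσsurj : Function.Surjective σ := by
    rintro ⟨x, hx⟩
    rw [← hs] at hx
    obtain ⟨f, -, hf⟩ := Submodule.mem_span_finset.mp hx
    refine ⟨fun i => f i, Subtype.ext ?_⟩
    show ∑ i : {x // x ∈ s}, f i • (i : Hmod A) = x
    rw [← hf, ← Finset.sum_coe_sort s (fun y => f y • y)]
  have hσbound : ∀ f, ‖σ f‖ ≤ (∑ i : {x // x ∈ s}, ‖(i : Hmod A)‖) * ‖f‖ := by
    intro f
    rw [← Submodule.norm_coe]
    calc ‖(σ f : Hmod A)‖ = ‖∑ i : {x // x ∈ s}, f i • (i : Hmod A)‖ := rfl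
      _ ≤ ∑ i : {x // x ∈ s}, ‖f i • (i : Hmod A)‖ := norm_sum_le _ _
      _ ≤ ∑ i : {x // x ∈ s}, ‖(i : Hmod A)‖ * ‖f‖ := by
          refine Finset.sum_le_sum fun i _ => ?_
          calc ‖f i • (i : Hmod A)‖ ≤ ‖f i‖ * ‖(i : Hmod A)‖ := norm_smul_le' _ _
            _ ≤ ‖f‖ * ‖(i : Hmod A)‖ :=
                mul_le_mul_of_nonneg_right (norm_le_pi_norm f i) (norm_nonneg _)
            _ = ‖(i : Hmod A)‖ * ‖f‖ := mul_comm _ _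
      _ = (∑ i : {x // x ∈ s}, ‖(i : Hmod A)‖) * ‖f‖ := (Finset.sum_mul _ _ _).symm
  set σL : ({x // x ∈ s} → A) →L[ℂ] ↥N :=
    LinearMap.mkContinuous (σ.restrictScalars ℂ) _ hσbound with hσL
  obtain ⟨C, hC0, hCs⟩ := σL.exists_preimage_norm_le (by exact hσsurj)
  -- choose the truncation level
  set κ : ℝ := (Fintype.card {x // x ∈ s} : ℝ) with hκ
  have hκ0 : 0 ≤ κ := Nat.cast_nonneg _
  set B : ℝ := ‖πL‖ + 1 with hB
  have hB0 : 0 < B := by positivity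
  set δ : ℝ := 1 / (2 * (C * B * (κ + 1))) with hδ
  have hδ0 : 0 < δ := by
    rw [hδ]
    positivity
  obtain ⟨n, hn⟩ : ∃ n, ∀ i ∈ s, ‖i - (Qn n) i‖ < δ := by
    have h : ∀ᶠ n in atTop, ∀ i ∈ s, ‖i - (Qn n) i‖ < δ := by
      rw [eventually_all_finset]
      intro i _
      exact (tendsto_norm_sub_Qn i).eventually (eventually_lt_nhds hδ0 |>.mono fun n h => by
        simpa using h)
    exact h.exists
  -- the approximate identity `T`
  set T : ↥N →ₗ[A] ↥N := π.comp ((Qn n).comp N.subtype) with hT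
  have hTbound : ∀ z : ↥N, ‖T z - z‖ ≤ 1 / 2 * ‖z‖ := by
    intro z
    obtain ⟨f, hf1, hf2⟩ := hCs z
    have hzval : (z : Hmod A) = ∑ i : {x // x ∈ s}, f i • (i : Hmod A) := by
      rw [← congrArg Subtype.val hf1]
      rfl
    have hw : (Qn n) (z : Hmod A) - (z : Hmod A)
        = ∑ i : {x // x ∈ s}, f i • ((Qn n) (i : Hmod A) - (i : Hmod A)) := by
      rw [hzval, map_sum]
      rw [← Finset.sum_sub_distrib]
      refine Finset.sum_congr rfl fun i _ => ?_
      rw [map_smul, smul_sub]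
    have hwnorm : ‖(Qn n) (z : Hmod A) - (z : Hmod A)‖ ≤ κ * (δ * (C * ‖z‖)) := by
      rw [hw]
      calc ‖∑ i : {x // x ∈ s}, f i • ((Qn n) (i : Hmod A) - (i : Hmod A))‖
          ≤ ∑ i : {x // x ∈ s}, ‖f i • ((Qn n) (i : Hmod A) - (i : Hmod A))‖ :=
            norm_sum_le _ _
        _ ≤ ∑ _i : {x // x ∈ s}, δ * (C * ‖z‖) := by
            refine Finset.sum_le_sum fun i _ => ?_
            calc ‖f i • ((Qn n) (i : Hmod A) - (i : Hmod A))‖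
                ≤ ‖f i‖ * ‖(Qn n) (i : Hmod A) - (i : Hmod A)‖ := norm_smul_le' _ _
              _ ≤ (C * ‖z‖) * δ := by
                  refine mul_le_mul ?_ ?_ (norm_nonneg _) (by positivity)
                  · exact (norm_le_pi_norm f i).trans hf2
                  · rw [norm_sub_rev]
                    exact (hn i i.2).le
              _ = δ * (C * ‖z‖) := mul_comm _ _
        _ = κ * (δ * (C * ‖z‖)) := by
            rw [Finset.sum_const, hκ]
            simp [nsmul_eq_mul, Finset.card_univ]
    -- now apply the projection
    have hTz : ((T z - z : ↥N) : Hmod A) = p ((Qn n) (z : Hmod A) - (z : Hmod A)) := by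
      rw [map_sub]
      rw [hT, hpdef]
      simp only [LinearMap.comp_apply, Submodule.subtype_apply, Submodule.coe_sub]
      congr 1
      exact (congrArg Subtype.val (Submodule.linearProjOfIsCompl_apply_left hMN.symm z)).symm
    have hpw : ‖p ((Qn n) (z : Hmod A) - (z : Hmod A))‖
        ≤ ‖πL‖ * ‖(Qn n) (z : Hmod A) - (z : Hmod A)‖ := by
      have := πL.le_opNorm ((Qn n) (z : Hmod A) - (z : Hmod A))
      calc ‖p ((Qn n) (z : Hmod A) - (z : Hmod A))‖
          = ‖πL ((Qn n) (z : Hmod A) - (z : Hmod A))‖ := by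
            rw [← Submodule.norm_coe]
            rfl
        _ ≤ ‖πL‖ * ‖(Qn n) (z : Hmod A) - (z : Hmod A)‖ := this
    rw [← Submodule.norm_coe, hTz]
    calc ‖p ((Qn n) (z : Hmod A) - (z : Hmod A))‖
        ≤ ‖πL‖ * ‖(Qn n) (z : Hmod A) - (z : Hmod A)‖ := hpw
      _ ≤ ‖πL‖ * (κ * (δ * (C * ‖z‖))) :=
          mul_le_mul_of_nonneg_left hwnorm πL.opNorm_nonneg
      _ ≤ 1 / 2 * ‖z‖ := by
          have hπn : (0:ℝ) ≤ ‖πL‖ := πL.opNorm_nonneg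
          have h1 : ‖πL‖ * (κ * (δ * (C * ‖z‖))) = (‖πL‖ * κ * C * δ) * ‖z‖ := by ring
          rw [h1]
          refine mul_le_mul_of_nonneg_right ?_ (norm_nonneg _)
          have ha : ‖πL‖ ≤ B := by rw [hB]; linarith
          have h2 : ‖πL‖ * κ * C ≤ C * B * (κ + 1) := by
            have hb1 : ‖πL‖ * κ * C ≤ B * κ * C :=
              mul_le_mul_of_nonneg_right (mul_le_mul_of_nonneg_right ha hκ0) hC0.le
            have hb2 : B * κ * C ≤ B * (κ + 1) * C :=
              mul_le_mul_of_nonneg_right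
                (mul_le_mul_of_nonneg_left (by linarith) hB0.le) hC0.le
            have hb3 : B * (κ + 1) * C = C * B * (κ + 1) := by ring
            linarith
          have h3 : ‖πL‖ * κ * C * δ ≤ (C * B * (κ + 1)) * δ :=
            mul_le_mul_of_nonneg_right h2 hδ0.le
          have h4 : (C * B * (κ + 1)) * δ = 1 / 2 := by
            rw [hδ, mul_one_div, div_eq_iff (by positivity : (2:ℝ) * (C * B * (κ+1)) ≠ 0)]
            ring
          exact h3.trans (le_of_eq h4)
  -- `T` is bijective
  set TL : ↥N →L[ℂ] ↥N := ⟨T.restrictScalars ℂ, by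
    have : Continuous fun z : ↥N => π ((Qn n) (z : Hmod A)) := by
      refine hπcont.comp ?_
      have hQcont : Continuous ((Qn n) : Hmod A → Hmod A) := by
        refine AddMonoidHomClass.continuous_of_bound (Qn n).toAddMonoidHom 1 fun x => ?_
        simpa using norm_Qn_le n x
      exact hQcont.comp continuous_subtype_val
    exact this⟩ with hTL
  have hTLsub : ‖(1 : ↥N →L[ℂ] ↥N) - TL‖ < 1 := by
    refine lt_of_le_of_lt (ContinuousLinearMap.opNorm_le_bound _ (by norm_num : (0:ℝ) ≤ 1/2)
      fun z => ?_) (by norm_num)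
    have := hTbound z
    rw [norm_sub_rev] at this
    have hTLz : TL z = T z := rfl
    simpa [hTLz] using this
  set u : (↥N →L[ℂ] ↥N)ˣ := Units.oneSub (1 - TL) (by exact hTLsub) with hu
  have huval : (u : ↥N →L[ℂ] ↥N) = TL := sub_sub_cancel 1 TL
  have hTbij : Function.Bijective (T : ↥N → ↥N) := by
    have h1 : Function.LeftInverse (↑u⁻¹ : ↥N →L[ℂ] ↥N) TL := fun z => by
      have := DFunLike.congr_fun (u.inv_mul) z
      rw [huval] at this
      simpa using this
    have h2 : Function.RightInverse (↑u⁻¹ : ↥N →L[ℂ] ↥N) TL := fun z => by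
      have := DFunLike.congr_fun (u.mul_inv) z
      rw [huval] at this
      simpa using this
    have : Function.Bijective (TL : ↥N → ↥N) :=
      Function.bijective_iff_has_inverse.mpr ⟨_, h1, h2⟩
    exact this
  -- conclude projectivity via the split `A^n`-presentation
  set eqN : ↥N ≃ₗ[A] ↥N := LinearEquiv.ofBijective T hTbij with heqN
  have : Module.Projective A (Fin n → A) := inferInstance
  refine Module.Projective.of_split ((trunc n).comp N.subtype)
    ((eqN.symm : ↥N →ₗ[A] ↥N).comp (π.comp (jmap n))) ?_
  apply LinearMap.ext
  intro z
  show eqN.symm (π ((jmap n) ((trunc n) (z : Hmod A)))) = z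
  have h1 : (jmap n) ((trunc n) (z : Hmod A)) = (Qn n) (z : Hmod A) := rfl
  rw [h1]
  have h2 : π ((Qn n) (z : Hmod A)) = eqN z := rfl
  rw [h2, LinearEquiv.symm_apply_apply]

end Hmod

open Hmod in
/-- Transfer of closedness, then the main theorem. -/
theorem main_theorem (L : Submodule A (ℕ → A))
    (hL : ∀ x : ℕ → A, x ∈ L ↔ Summable (fun i => x i * star (x i)))
    (M N : Submodule A L) (hMN : IsCompl M N)
    (hMclosed : ∀ x : L, (∀ ε > (0:ℝ), ∃ y ∈ M,
        ‖∑' i, ((x:ℕ → A) - (y:L)) i * star (((x:ℕ → A) - (y:L)) i)‖ < ε) → x ∈ M)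
    (hNclosed : ∀ x : L, (∀ ε > (0:ℝ), ∃ y ∈ N,
        ‖∑' i, ((x:ℕ → A) - (y:L)) i * star (((x:ℕ → A) - (y:L)) i)‖ < ε) → x ∈ N)
    (hNfg : N.FG) :
    Module.Projective A N := by
  classical
  set e : ↥L ≃ₗ[A] Hmod A :=
    { toFun := fun x => ⟨x.1, (hL x.1).1 x.2⟩
      invFun := fun y => ⟨y.val, (hL y.val).2 y.summable'⟩
      map_add' := fun x y => rfl
      map_smul' := fun a x => rfl
      left_inv := fun x => rfl
      right_inv := fun y => rfl } with he
  set M' : Submodule A (Hmod A) := M.map (e : ↥L →ₗ[A] Hmod A) with hM'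
  set N' : Submodule A (Hmod A) := N.map (e : ↥L →ₗ[A] Hmod A) with hN'
  have hinj : Function.Injective (e : ↥L →ₗ[A] Hmod A) := e.injective
  have hMN' : IsCompl M' N' := by
    constructor
    · rw [disjoint_iff, hM', hN', ← Submodule.map_inf _ hinj,
        disjoint_iff.mp hMN.disjoint, Submodule.map_bot]
    · rw [codisjoint_iff, hM', hN', ← Submodule.map_sup,
        codisjoint_iff.mp hMN.codisjoint, Submodule.map_top, LinearEquiv.range]
  -- the key norm identification
  have hnorm : ∀ x y : Hmod A,
      ‖∑' i, ((e.symm x : ℕ → A) - (e.symm y : ↥L)) i *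
        star (((e.symm x : ℕ → A) - (e.symm y : ↥L)) i)‖ = ‖x - y‖^2 := by
    intro x y
    have hi : ∀ i, ((e.symm x : ℕ → A) - (e.symm y : ↥L)) i = (x - y).val i := by
      intro i
      show x.val i - y.val i = _
      rw [sub_val]
      rfl
    have h2 : (fun i => ((e.symm x : ℕ → A) - (e.symm y : ↥L)) i *
        star (((e.symm x : ℕ → A) - (e.symm y : ↥L)) i))
        = fun i => (x - y).val i * star ((x - y).val i) := by
      funext i; rw [hi]
    rw [h2]
    rw [show (∑' i, (x - y).val i * star ((x - y).val i)) = gram (x - y) from rfl]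
    rw [← norm_sq]
  have hclosed : ∀ (P : Submodule A ↥L),
      (∀ x : L, (∀ ε > (0:ℝ), ∃ y ∈ P,
        ‖∑' i, ((x:ℕ → A) - (y:L)) i * star (((x:ℕ → A) - (y:L)) i)‖ < ε) → x ∈ P) →
      IsClosed ((P.map (e : ↥L →ₗ[A] Hmod A) : Submodule A (Hmod A)) : Set (Hmod A)) := by
    intro P hP
    refine isClosed_of_closure_subset fun x hx => ?_
    have hx' : ∀ ε > (0:ℝ), ∃ y ∈ P.map (e : ↥L →ₗ[A] Hmod A), ‖x - y‖ < ε := by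
      intro ε hε
      rcases Metric.mem_closure_iff.mp hx ε hε with ⟨y, hy, hd⟩
      exact ⟨y, hy, by rwa [dist_eq_norm] at hd⟩
    have hmem : e.symm x ∈ P := by
      apply hP
      intro ε hε
      obtain ⟨y, hyP, hy⟩ := hx' (Real.sqrt ε) (Real.sqrt_pos.mpr hε)
      refine ⟨e.symm y, ?_, ?_⟩
      · obtain ⟨y₀, hy₀, rfl⟩ := hyP
        simpa using hy₀
      · rw [hnorm x y]
        have h3 : ‖x - y‖^2 < Real.sqrt ε ^ 2 := by
          have := norm_nonneg (x - y)
          nlinarith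
        rwa [Real.sq_sqrt hε.le] at h3
    have h4 : e (e.symm x) = x := e.apply_symm_apply x
    rw [← h4]
    exact Submodule.mem_map_of_mem hmem
  have hM'closed := hclosed M hMclosed
  have hN'closed := hclosed N hNclosed
  have hN'fg : N'.FG := hNfg.map _
  haveI hproj' : Module.Projective A ↥N' :=
    projective_of_isCompl_closed_fg M' N' hMN' hM'closed hN'closed hN'fg
  exact Module.Projective.of_equiv
    (Submodule.equivMapOfInjective (e : ↥L →ₗ[A] Hmod A) hinj N).symm

end L2Aux

/-- If `ℓ²(A) = M ⊕ N` with `M`, `N` closed submodules of the standard Hilbert `A`-module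
`ℓ²(A)` (sequences `(a_i)` with `Σ a_i a_i*` convergent in `A`, with norm
`‖x‖² = ‖Σ x_i x_i*‖`), and `N` has a finite number of generators, then `N` is a
projective `A`-module. -/
theorem l2_direct_summand_fg_projective
    {A : Type*} [CStarAlgebra A] [PartialOrder A] [StarOrderedRing A]
    (L : Submodule A (ℕ → A))
    (hL : ∀ x : ℕ → A, x ∈ L ↔ Summable (fun i => x i * star (x i)))
    (M N : Submodule A L)
    (hMN : IsCompl M N)
    -- `M` and `N` are closed with respect to the Hilbert module norm
    -- `‖x‖ = ‖Σ x_i x_i*‖^{1/2}` on `ℓ²(A)`: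
    (hMclosed : ∀ x : L, (∀ ε > (0:ℝ), ∃ y ∈ M,
        ‖∑' i, ((x:ℕ → A) - (y:L)) i * star (((x:ℕ → A) - (y:L)) i)‖ < ε) → x ∈ M)
    (hNclosed : ∀ x : L, (∀ ε > (0:ℝ), ∃ y ∈ N,
        ‖∑' i, ((x:ℕ → A) - (y:L)) i * star (((x:ℕ → A) - (y:L)) i)‖ < ε) → x ∈ N)
    (hNfg : N.FG) :
    Module.Projective A N :=
  L2Aux.main_theorem L hL M N hMN hMclosed hNclosed hNfg
end
end

section
/- Let T be an adjointable operator with closed range N₀ = Ran T, and T₀: M → N₀ its corestriction. Then there exists δ > 0 such that ‖y‖ ≤ δ⁻²‖T₀T₀* y‖ for all y ∈ N₀; in particular T₀T₀* is bounded below and invertible on N₀. -/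
set_option maxHeartbeats 4000000
set_option synthInstance.maxHeartbeats 1000000



private theorem aux_surjective {F : Type*} [NormedAddCommGroup F] [NormedSpace ℂ F]
    [CompleteSpace F] (S : F →L[ℂ] F) (B : ℝ) (hB : 0 < B)
    (hb : ∀ lam : ℝ, 0 ≤ lam → ∀ z : F, ‖z‖ ≤ B * ‖(S + ((lam : ℝ) : ℂ) • 1) z‖) :
    Function.Surjective S := by
  -- bound on the inverse of a unit of the form `S + λ`
  have hinv_bound : ∀ lam : ℝ, 0 ≤ lam → ∀ u : (F →L[ℂ] F)ˣ,
      (↑u : F →L[ℂ] F) = S + ((lam : ℝ) : ℂ) • 1 → ‖(↑u⁻¹ : F →L[ℂ] F)‖ ≤ B := by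
    intro lam hlam u hu
    refine ContinuousLinearMap.opNorm_le_bound _ hB.le fun z => ?_
    have h1 : (S + ((lam : ℝ) : ℂ) • (1 : F →L[ℂ] F)) ((↑u⁻¹ : F →L[ℂ] F) z) = z := by
      rw [← hu]
      calc (↑u : F →L[ℂ] F) ((↑u⁻¹ : F →L[ℂ] F) z)
          = ((↑u * ↑u⁻¹ : F →L[ℂ] F)) z := rfl
        _ = z := by rw [u.mul_inv]; rfl
    have h2 := hb lam hlam ((↑u⁻¹ : F →L[ℂ] F) z)
    rw [h1] at h2
    exact h2
  -- base case: `S + Λ` is a unit for `Λ = ‖S‖ + 1`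
  set Λ : ℝ := ‖S‖ + 1 with hΛdef
  have hΛpos : 0 < Λ := by positivity
  have hbase : IsUnit (S + ((Λ : ℝ) : ℂ) • (1 : F →L[ℂ] F)) := by
    set c : ℂ := ((Λ⁻¹ : ℝ) : ℂ) with hc
    have hnorm : ‖(-c) • S‖ < 1 := by
      have e : ‖(-c) • S‖ ≤ ‖(-c)‖ * ‖S‖ := ContinuousLinearMap.opNorm_smul_le (-c) S
      have e2 : ‖(-c)‖ = Λ⁻¹ := by
        rw [norm_neg, hc, Complex.norm_real, Real.norm_eq_abs,
          abs_of_nonneg (inv_nonneg.mpr hΛpos.le)]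
      rw [e2] at e
      have hlt : ‖S‖ < Λ := by rw [hΛdef]; linarith
      have h := (div_lt_one hΛpos).mpr hlt
      rw [div_eq_inv_mul] at h
      exact lt_of_le_of_lt e h
    have h1 : IsUnit ((1 : F →L[ℂ] F) - (-c) • S) :=
      ⟨Units.oneSub ((-c) • S) (by exact hnorm), by exact Units.val_oneSub _ _⟩
    have h2 : IsUnit (((Λ : ℝ) : ℂ) • (1 : F →L[ℂ] F)) := by
      rw [← Algebra.algebraMap_eq_smul_one]
      exact (isUnit_iff_ne_zero.mpr (by exact_mod_cast hΛpos.ne')).map (algebraMap ℂ (F →L[ℂ] F))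
    have h3 := h2.mul h1
    have heq : (((Λ : ℝ) : ℂ) • (1 : F →L[ℂ] F)) * ((1 : F →L[ℂ] F) - (-c) • S)
        = S + ((Λ : ℝ) : ℂ) • 1 := by
      ext z
      simp only [ContinuousLinearMap.mul_apply, ContinuousLinearMap.smul_apply,
        ContinuousLinearMap.one_apply, ContinuousLinearMap.sub_apply,
        ContinuousLinearMap.add_apply, smul_sub, smul_smul]
      rw [show ((Λ : ℝ) : ℂ) * (-c) = -1 from by
        rw [hc, mul_neg, ← Complex.ofReal_mul, mul_inv_cancel₀ hΛpos.ne', Complex.ofReal_one],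
        neg_one_smul, sub_neg_eq_add, add_comm]
    rwa [heq] at h3
  -- step: nearby values of `λ` also give units
  have hBinvpos : 0 < B⁻¹ := by positivity
  have hstep : ∀ μ : ℝ, 0 ≤ μ → IsUnit (S + ((μ : ℝ) : ℂ) • (1 : F →L[ℂ] F)) →
      ∀ ν : ℝ, |ν - μ| < B⁻¹ → IsUnit (S + ((ν : ℝ) : ℂ) • (1 : F →L[ℂ] F)) := by
    intro μ hμ hu ν hν
    obtain ⟨u, hu⟩ := hu
    rcases eq_or_ne (‖(↑u⁻¹ : F →L[ℂ] F)‖) 0 with h0 | h0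
    · have h1 : (↑u⁻¹ : F →L[ℂ] F) = 0 := (ContinuousLinearMap.opNorm_zero_iff _).mp h0
      have h2 : (0 : F →L[ℂ] F) = 1 := by rw [← u.mul_inv, h1, mul_zero]
      haveI : Subsingleton (F →L[ℂ] F) := subsingleton_of_zero_eq_one h2
      exact isUnit_of_subsingleton _
    · have hinv : ‖(↑u⁻¹ : F →L[ℂ] F)‖ ≤ B := hinv_bound μ hμ u hu
      have hinvpos : 0 < ‖(↑u⁻¹ : F →L[ℂ] F)‖ :=
        lt_of_le_of_ne (ContinuousLinearMap.opNorm_nonneg _) (Ne.symm h0)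
      have hlt : ‖(S + ((ν : ℝ) : ℂ) • (1 : F →L[ℂ] F)) - ↑u‖ < ‖(↑u⁻¹ : F →L[ℂ] F)‖⁻¹ := by
        rw [hu]
        have e1 : (S + ((ν : ℝ) : ℂ) • (1 : F →L[ℂ] F)) - (S + ((μ : ℝ) : ℂ) • 1)
            = (((ν - μ : ℝ)) : ℂ) • (1 : F →L[ℂ] F) := by
          ext z
          simp only [ContinuousLinearMap.sub_apply, ContinuousLinearMap.add_apply,
            ContinuousLinearMap.smul_apply, ContinuousLinearMap.one_apply]
          push_cast
          rw [sub_smul]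
          abel
        rw [e1]
        have e2 : ‖(((ν - μ : ℝ)) : ℂ) • (1 : F →L[ℂ] F)‖ ≤ |ν - μ| := by
          have ea : ‖(((ν - μ : ℝ)) : ℂ) • (1 : F →L[ℂ] F)‖
              ≤ ‖(((ν - μ : ℝ)) : ℂ)‖ * ‖(1 : F →L[ℂ] F)‖ :=
            ContinuousLinearMap.opNorm_smul_le _ _
          have eb : ‖(((ν - μ : ℝ)) : ℂ)‖ = |ν - μ| := by
            rw [Complex.norm_real, Real.norm_eq_abs]
          rw [eb] at ea
          calc ‖(((ν - μ : ℝ)) : ℂ) • (1 : F →L[ℂ] F)‖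
              ≤ |ν - μ| * ‖(1 : F →L[ℂ] F)‖ := ea
            _ ≤ |ν - μ| * 1 := by
                have h1le : ‖(1 : F →L[ℂ] F)‖ ≤ 1 := ContinuousLinearMap.norm_id_le
                exact mul_le_mul_of_nonneg_left h1le (abs_nonneg _)
            _ = |ν - μ| := mul_one _
        have e3 : B⁻¹ ≤ ‖(↑u⁻¹ : F →L[ℂ] F)‖⁻¹ := by
          have := one_div_le_one_div_of_le hinvpos hinv
          simpa [one_div] using this
        linarith
      exact ⟨Units.ofNearby u _ hlt, by exact Units.val_ofNearby _ _ _⟩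
  -- descending induction down to `λ = 0`
  have hiter : ∀ n : ℕ, IsUnit (S +
      (((max (Λ - n * (B⁻¹ / 2)) 0 : ℝ)) : ℂ) • (1 : F →L[ℂ] F)) := by
    intro n
    induction n with
    | zero =>
      have h0' : Λ - (0 : ℕ) * (B⁻¹ / 2) = Λ := by push_cast; ring
      rw [h0', max_eq_left hΛpos.le]; exact hbase
    | succ n ih =>
      refine hstep _ (le_max_right _ _) ih _ ?_
      have h1 : |max (Λ - (n + 1 : ℕ) * (B⁻¹ / 2)) 0 - max (Λ - n * (B⁻¹ / 2)) 0|
          ≤ |(Λ - (n + 1 : ℕ) * (B⁻¹ / 2)) - (Λ - n * (B⁻¹ / 2))| :=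
        abs_max_sub_max_le_abs _ _ _
      have h2 : (Λ - (n + 1 : ℕ) * (B⁻¹ / 2)) - (Λ - n * (B⁻¹ / 2))
          = -(B⁻¹ / 2) := by push_cast; ring
      rw [h2, abs_neg, abs_of_nonneg (show (0:ℝ) ≤ B⁻¹ / 2 by positivity)] at h1
      linarith
  -- conclude `S` is a unit, hence surjective
  have hSunit : IsUnit S := by
    obtain ⟨n, hn⟩ := exists_nat_gt (Λ / (B⁻¹ / 2))
    have hhalf : 0 < B⁻¹ / 2 := by positivity
    have hle : Λ - n * (B⁻¹ / 2) ≤ 0 := by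
      have := (div_lt_iff₀ hhalf).mp hn
      linarith
    have h := hiter n
    rw [max_eq_right hle] at h
    simpa using h
  obtain ⟨u, hu⟩ := hSunit
  intro z
  refine ⟨(↑u⁻¹ : F →L[ℂ] F) z, ?_⟩
  rw [← hu]
  calc (↑u : F →L[ℂ] F) ((↑u⁻¹ : F →L[ℂ] F) z)
      = ((↑u * ↑u⁻¹ : F →L[ℂ] F)) z := rfl
    _ = z := by rw [u.mul_inv]; rfl

open scoped RightActions in
/-- The Hilbert C⋆-module class with the right-action convention of the December 2024 Mathlib
(`CStarModule` there), where `A` acts on the right via `SMul Aᵐᵒᵖ E`. -/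
class CStarModuleRight (A E : Type*) [NonUnitalSemiring A] [StarRing A]
    [Module ℂ A] [AddCommGroup E] [Module ℂ E] [PartialOrder A] [SMul Aᵐᵒᵖ E] [Norm A] [Norm E]
    extends Inner A E where
  inner_add_right {x} {y} {z} : inner x (y + z) = inner x y + inner x z
  inner_self_nonneg {x} : 0 ≤ inner x x
  inner_self {x} : inner x x = 0 ↔ x = 0
  inner_op_smul_right {a : A} {x y : E} : inner x (y <• a) = inner x y * a
  inner_smul_right_complex {z : ℂ} {x} {y} : inner x (z • y) = z • inner x y
  star_inner x y : star (inner x y) = inner y x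
  norm_eq_sqrt_norm_inner_self x : ‖x‖ = √‖inner x x‖

namespace CStarModuleRight

open scoped RightActions

variable {A E : Type*} [CStarAlgebra A] [PartialOrder A] [StarOrderedRing A]
  [NormedAddCommGroup E] [NormedSpace ℂ E] [SMul Aᵐᵒᵖ E] [CStarModuleRight A E]

local notation "⟪" x ", " y "⟫" => inner A x y

lemma inner_add_left {x y z : E} : ⟪x + y, z⟫ = ⟪x, z⟫ + ⟪y, z⟫ := by
  rw [← star_star (r := ⟪x + y, z⟫)]
  simp only [inner_add_right, star_add, star_inner]

lemma inner_op_smul_left {a : A} {x y : E} : ⟪x <• a, y⟫ = star a * ⟪x, y⟫ := by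
  rw [← star_inner, inner_op_smul_right, star_mul, star_inner]

lemma inner_smul_left_complex {z : ℂ} {x y : E} : ⟪z • x, y⟫ = star z • ⟪x, y⟫ := by
  rw [← star_inner, inner_smul_right_complex, star_smul, star_inner]

lemma inner_smul_left_real {z : ℝ} {x y : E} : ⟪z • x, y⟫ = z • ⟪x, y⟫ := by
  have h₁ : z • x = (z : ℂ) • x := by simp
  rw [h₁, inner_smul_left_complex]
  simp

lemma inner_smul_right_real {z : ℝ} {x y : E} : ⟪x, z • y⟫ = z • ⟪x, y⟫ := by
  have h₁ : z • y = (z : ℂ) • y := by simp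
  rw [h₁, inner_smul_right_complex]
  simp

lemma inner_zero_right {x : E} : ⟪x, 0⟫ = 0 := by
  have h := inner_add_right (A := A) (x := x) (y := (0 : E)) (z := 0)
  rw [add_zero] at h
  simpa using h

lemma inner_zero_left {x : E} : ⟪0, x⟫ = 0 := by
  rw [← star_inner, inner_zero_right, star_zero]

lemma inner_neg_right {x y : E} : ⟪x, -y⟫ = -⟪x, y⟫ := by
  have h := inner_add_right (A := A) (x := x) (y := y) (z := -y)
  rw [add_neg_cancel, inner_zero_right] at h
  exact (neg_eq_of_add_eq_zero_right h.symm).symm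

lemma inner_sub_right {x y z : E} : ⟪x, y - z⟫ = ⟪x, y⟫ - ⟪x, z⟫ := by
  rw [sub_eq_add_neg, inner_add_right, inner_neg_right, ← sub_eq_add_neg]

lemma inner_sub_left {x y z : E} : ⟪x - y, z⟫ = ⟪x, z⟫ - ⟪y, z⟫ := by
  rw [← star_inner, inner_sub_right, star_sub, star_inner, star_inner]

lemma norm_sq_eq {x : E} : ‖x‖ ^ 2 = ‖⟪x, x⟫‖ := by
  rw [norm_eq_sqrt_norm_inner_self (A := A) x, Real.sq_sqrt (norm_nonneg _)]

lemma inner_mul_inner_swap_le {x y : E} : ⟪y, x⟫ * ⟪x, y⟫ ≤ ‖x‖ ^ 2 • ⟪y, y⟫ := by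
  rcases eq_or_ne x 0 with h | h
  · subst h
    simp [inner_zero_left, inner_zero_right]
  · have hxpos : 0 < ‖x‖ := norm_pos_iff.mpr h
    have h₁ : ∀ (a : A),
        (0 : A) ≤ ‖x‖ ^ 2 • (star a * a) - ‖x‖ ^ 2 • (star a * ⟪x, y⟫)
                  - ‖x‖ ^ 2 • (⟪y, x⟫ * a) + ‖x‖ ^ 2 • (‖x‖ ^ 2 • ⟪y, y⟫) := fun a => by
      calc (0 : A) ≤ ⟪x <• a - ‖x‖ ^ 2 • y, x <• a - ‖x‖ ^ 2 • y⟫ := inner_self_nonneg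
        _ = star a * ⟪x, x⟫ * a - ‖x‖ ^ 2 • (star a * ⟪x, y⟫)
                  - ‖x‖ ^ 2 • (⟪y, x⟫ * a) + ‖x‖ ^ 2 • (‖x‖ ^ 2 • ⟪y, y⟫) := by
              simp only [inner_sub_right, inner_op_smul_right, inner_sub_left,
                inner_op_smul_left, inner_smul_left_real, inner_smul_right_real,
                smul_sub, sub_mul, mul_sub, smul_mul_assoc, mul_assoc]
              abel
        _ ≤ ‖x‖ ^ 2 • (star a * a) - ‖x‖ ^ 2 • (star a * ⟪x, y⟫)
                  - ‖x‖ ^ 2 • (⟪y, x⟫ * a) + ‖x‖ ^ 2 • (‖x‖ ^ 2 • ⟪y, y⟫) := by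
              gcongr
              calc _ ≤ ‖⟪x, x⟫‖ • (star a * a) :=
                  CStarAlgebra.star_left_conjugate_le_norm_smul (star_inner x x)
                _ = ‖x‖ ^ 2 • (star a * a) := by rw [norm_sq_eq (A := A) (x := x)]
    specialize h₁ ⟪x, y⟫
    simp only [star_inner, sub_self, zero_sub, le_neg_add_iff_add_le, add_zero] at h₁
    rwa [smul_le_smul_iff_of_pos_left (pow_pos hxpos _)] at h₁

variable (E) in
lemma norm_inner_le {x y : E} : ‖⟪x, y⟫‖ ≤ ‖x‖ * ‖y‖ := by
  have := calc ‖⟪x, y⟫‖ ^ 2 = ‖⟪y, x⟫ * ⟪x, y⟫‖ := by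
                rw [← star_inner x y, CStarRing.norm_star_mul_self, pow_two]
    _ ≤ ‖‖x‖ ^ 2 • ⟪y, y⟫‖ := by
                refine CStarAlgebra.norm_le_norm_of_nonneg_of_le ?_ inner_mul_inner_swap_le
                rw [← star_inner x y]
                exact star_mul_self_nonneg _
    _ = ‖x‖ ^ 2 * ‖⟪y, y⟫‖ := by simp [norm_smul]
    _ = ‖x‖ ^ 2 * ‖y‖ ^ 2 := by rw [norm_sq_eq (A := A) (x := y)]
    _ = (‖x‖ * ‖y‖) ^ 2 := by rw [mul_pow]
  exact (pow_le_pow_iff_left₀ (norm_nonneg _)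
    (mul_nonneg (norm_nonneg _) (norm_nonneg _)) (by simp)).mp this

end CStarModuleRight

/-- Let `T` be an adjointable operator between Hilbert `A`-modules with closed range
`N₀ = Ran T`, and let `T₀ : M → N₀` be its corestriction. Then there is `δ > 0` (coming
from the open mapping theorem) such that `‖y‖ ≤ δ⁻² ‖T₀T₀* y‖` for all `y ∈ N₀`; in
particular `T₀T₀*` is bounded below on `N₀` and invertible on `N₀`. -/
theorem corestriction_bounded_below
    {A : Type*} [CStarAlgebra A] [PartialOrder A] [StarOrderedRing A]
    {M N : Type*} [NormedAddCommGroup M] [NormedSpace ℂ M] [SMul Aᵐᵒᵖ M] [CStarModuleRight A M]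
    [NormedAddCommGroup N] [NormedSpace ℂ N] [SMul Aᵐᵒᵖ N] [CStarModuleRight A N]
    [CompleteSpace M] [CompleteSpace N]
    (T : M →L[ℂ] N) (Tadj : N →L[ℂ] M)
    (hadj : ∀ (x : M) (y : N), inner (𝕜 := A) (T x) y = inner (𝕜 := A) x (Tadj y))
    (hclosed : IsClosed (Set.range T)) :
    ∃ δ : ℝ, 0 < δ ∧
      (∀ y ∈ LinearMap.range (T : M →ₗ[ℂ] N), ‖y‖ ≤ (δ⁻¹) ^ 2 * ‖T (Tadj y)‖) ∧
      (∀ y ∈ LinearMap.range (T : M →ₗ[ℂ] N), ∃ w ∈ LinearMap.range (T : M →ₗ[ℂ] N), T (Tadj w) = y) := by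
  classical
  -- the closed range as a complete submodule
  set E : Submodule ℂ N := LinearMap.range (T : M →ₗ[ℂ] N) with hE
  have hEclosed : IsClosed (E : Set N) := by
    have h : (E : Set N) = Set.range T := by
      ext y
      simp [hE, LinearMap.mem_range, Set.mem_range]
    rw [h]; exact hclosed
  haveI : CompleteSpace E := hEclosed.completeSpace_coe
  -- the corestriction, and the open mapping constant
  set T₀ : M →L[ℂ] E := T.codRestrict E (fun x => LinearMap.mem_range_self _ x) with hT₀
  have hT₀surj : Function.Surjective T₀ := by
    rintro ⟨y, hy⟩
    obtain ⟨x, hx⟩ := hy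
    exact ⟨x, Subtype.ext hx⟩
  obtain ⟨C, hC, hpre⟩ := T₀.exists_preimage_norm_le hT₀surj
  -- Step 1: `‖y‖ ≤ C * ‖Tadj y‖` on the range.
  have key1 : ∀ y : N, y ∈ E → ‖y‖ ≤ C * ‖Tadj y‖ := by
    intro y hy
    obtain ⟨x, hx, hxn⟩ := hpre ⟨y, hy⟩
    have hxy : T x = y := congrArg Subtype.val hx
    have hxn' : ‖x‖ ≤ C * ‖y‖ := hxn
    have h2 : ‖y‖ ^ 2 = ‖inner (𝕜 := A) y y‖ := CStarModuleRight.norm_sq_eq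
    have h3 : inner (𝕜 := A) y y = inner (𝕜 := A) x (Tadj y) := by
      rw [← hadj x y, hxy]
    have h4 : ‖inner (𝕜 := A) x (Tadj y)‖ ≤ ‖x‖ * ‖Tadj y‖ := CStarModuleRight.norm_inner_le M
    rcases eq_or_lt_of_le (norm_nonneg y) with h0 | h0
    · rw [← h0]; positivity
    · have h5 : ‖y‖ * ‖y‖ ≤ (C * ‖Tadj y‖) * ‖y‖ := by
        rw [h3, pow_two] at h2
        nlinarith [norm_nonneg (Tadj y)]
      exact le_of_mul_le_mul_right h5 h0
  -- Step 2: uniform lower bound for `T Tadj + λ` on the range, `λ ≥ 0`.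
  have key2 : ∀ lam : ℝ, 0 ≤ lam → ∀ y : N, y ∈ E →
      ‖y‖ ≤ C ^ 2 * ‖T (Tadj y) + (lam : ℂ) • y‖ := by
    intro lam hlam y hy
    set v : N := T (Tadj y) + (lam : ℂ) • y with hv
    have h1 : inner (𝕜 := A) v y
        = inner (𝕜 := A) (Tadj y) (Tadj y) + lam • inner (𝕜 := A) y y := by
      rw [hv, CStarModuleRight.inner_add_left, hadj (Tadj y) y]
      congr 1
      have : ((lam : ℂ) • y) = lam • y := by simp
      rw [this, CStarModuleRight.inner_smul_left_real]
    have hpos : (0 : A) ≤ lam • inner (𝕜 := A) y y := by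
      have h2 : lam • inner (𝕜 := A) y y
          = inner (𝕜 := A) (Real.sqrt lam • y) (Real.sqrt lam • y) := by
        rw [CStarModuleRight.inner_smul_left_real, CStarModuleRight.inner_smul_right_real, smul_smul,
          Real.mul_self_sqrt hlam]
      rw [h2]; exact CStarModuleRight.inner_self_nonneg
    have h3 : ‖inner (𝕜 := A) (Tadj y) (Tadj y)‖ ≤ ‖inner (𝕜 := A) v y‖ := by
      rw [h1]
      exact CStarAlgebra.norm_le_norm_of_nonneg_of_le CStarModuleRight.inner_self_nonneg
        (le_add_of_nonneg_right hpos)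
    have h4 : ‖inner (𝕜 := A) v y‖ ≤ ‖v‖ * ‖y‖ := CStarModuleRight.norm_inner_le N
    have h5 : ‖Tadj y‖ ^ 2 = ‖inner (𝕜 := A) (Tadj y) (Tadj y)‖ := CStarModuleRight.norm_sq_eq
    have h6 := key1 y hy
    have h7 : ‖Tadj y‖ ^ 2 ≤ ‖v‖ * ‖y‖ := by rw [h5]; exact h3.trans h4
    rcases eq_or_lt_of_le (norm_nonneg y) with h0 | h0
    · rw [← h0]; positivity
    · have h8 : ‖y‖ * ‖y‖ ≤ (C ^ 2 * ‖v‖) * ‖y‖ := by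
        nlinarith [norm_nonneg (Tadj y), norm_nonneg y, hC]
      exact le_of_mul_le_mul_right h8 h0
  -- the operator `S = T₀ T₀*` on `E`
  set S : E →L[ℂ] E :=
    ((T.comp Tadj).comp (Submodule.subtypeL E)).codRestrict E
      (fun z => ⟨Tadj z, rfl⟩) with hS
  have hSapp : ∀ (lam : ℝ) (z : E),
      (((S + (lam : ℂ) • (1 : E →L[ℂ] E)) z : E) : N) = T (Tadj ↑z) + (lam : ℂ) • (↑z : N) := by
    intro lam z
    simp [hS]
    rfl
  -- uniform bounded-below estimate at operator level
  have hb_op : ∀ lam : ℝ, 0 ≤ lam → ∀ z : E,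
      ‖z‖ ≤ C ^ 2 * ‖(S + (lam : ℂ) • (1 : E →L[ℂ] E)) z‖ := by
    intro lam hlam z
    have h1 := key2 lam hlam (↑z : N) z.2
    have h2 : ‖z‖ = ‖(z : N)‖ := rfl
    have h3 : ‖(S + (lam : ℂ) • (1 : E →L[ℂ] E)) z‖
        = ‖T (Tadj ↑z) + (lam : ℂ) • (↑z : N)‖ := by
      rw [show ‖(S + (lam : ℂ) • (1 : E →L[ℂ] E)) z‖
          = ‖(((S + (lam : ℂ) • (1 : E →L[ℂ] E)) z : E) : N)‖ from rfl, hSapp]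
    rw [h2, h3]; exact h1
  -- surjectivity via the auxiliary lemma
  have hsurj : Function.Surjective S := aux_surjective S (C ^ 2) (by positivity) hb_op
  -- finish
  refine ⟨C⁻¹, inv_pos.mpr hC, ?_, ?_⟩
  · intro y hy
    have h := key2 0 le_rfl y hy
    simpa [inv_inv] using h
  · intro y hy
    obtain ⟨w', hw'⟩ := hsurj ⟨y, hy⟩
    refine ⟨(w' : N), w'.2, ?_⟩
    have h2 := congrArg Subtype.val hw'
    exact h2
end
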